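/- For all 1 ≤ i < j ≤ q, the identity C_{i,j} = M_{i,j} + Σ_{k=i+1}^{j−1} M_{i,k} C_{k,j} holds in A (the terms of C_{i,j} grouped according to the first element of the admissible sequence which is greater than i). -/
import Mathlib


open scoped BigOperators

/-- A finite sequence of positive integers is *admissible* if between any two
occurrences of a number `s` there is an entry greater than `s`. -/
def IsAdmissible (l : List ℕ) : Prop :=
  ∀ (l₁ l₂ l₃ : List ℕ) (s : ℕ), l = l₁ ++ s :: (l₂ ++ s :: l₃) → ∃ t ∈ l₂, s < t

/-- `Dset n` is the set of admissible sequences all of whose entries lie in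
`{1, …, n-1}` (including the empty sequence). -/
def Dset (n : ℕ) : Set (List ℕ) :=
  {l | IsAdmissible l ∧ ∀ x ∈ l, 1 ≤ x ∧ x < n}

/-- The product `B i i₁ * B i₁ i₂ * ⋯ * B i_c j` along a sequence `[i₁, …, i_c]`;
the empty sequence contributes `B i j`. -/
def pathProd {A : Type*} [Ring A] (B : ℕ → ℕ → A) (i j : ℕ) : List ℕ → A
  | [] => B i j
  | a :: l => B i a * pathProd B a j l

/-- `M i j = Σ_{(i₁,…,i_c) ∈ D_{min(i,j)}} B i i₁ ⋯ B i_c j`. -/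
noncomputable def Mpoly {A : Type*} [Ring A] (B : ℕ → ℕ → A) (i j : ℕ) : A :=
  ∑ᶠ l ∈ Dset (min i j), pathProd B i j l

/-- `C i j` for `i < j` sums `B i i₁ ⋯ B i_c j` over sequences with
`(i, i₁, …, i_c) ∈ D_j`; and `C n n = M n n`. -/
noncomputable def Cpoly {A : Type*} [Ring A] (B : ℕ → ℕ → A) (i j : ℕ) : A :=
  if i = j then Mpoly B i j
  else ∑ᶠ l ∈ {l : List ℕ | (i :: l) ∈ Dset j}, pathProd B i j l

/-- The generators `B_{i,j}` of the free noncommutative unital ℤ-algebra. -/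
noncomputable def Bgen : ℕ → ℕ → FreeAlgebra ℤ (ℕ × ℕ) :=
  fun i j => FreeAlgebra.ι ℤ (i, j)

/-- The commuting indeterminates `B_{i,j}` of the polynomial ring `ℤ[B_{i,j}]`. -/
noncomputable def Bcomm : ℕ → ℕ → MvPolynomial (ℕ × ℕ) ℤ :=
  fun i j => MvPolynomial.X (i, j)

/-! ### Auxiliary lemmas -/

lemma IsAdmissible.infix {L l : List ℕ} (hL : IsAdmissible L) (h : l <:+: L) :
    IsAdmissible l := by
  obtain ⟨p, q, rfl⟩ := h
  intro l₁ l₂ l₃ s hl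
  refine hL (p ++ l₁) l₂ (l₃ ++ q) s ?_
  subst hl; simp [List.append_assoc]

lemma isAdmissible_cons_of_lt {i : ℕ} {l : List ℕ} (hl : IsAdmissible l)
    (hlt : ∀ x ∈ l, x < i) : IsAdmissible (i :: l) := by
  intro l₁ l₂ l₃ s h
  cases l₁ with
  | nil =>
      rw [List.nil_append] at h
      obtain ⟨h1, h2⟩ := List.cons.inj h
      have := hlt s (by rw [h2]; simp)
      omega
  | cons a t =>
      simp only [List.cons_append, List.cons.injEq] at h
      exact hl t l₂ l₃ s h.2

lemma isAdmissible_glue {u v : List ℕ} {k : ℕ}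
    (hu : IsAdmissible u) (hv : IsAdmissible (k :: v)) (hlt : ∀ x ∈ u, x < k) :
    IsAdmissible (u ++ k :: v) := by
  intro l₁ l₂ l₃ s h
  rcases List.append_eq_append_iff.1 h with ⟨a', h1, h2⟩ | ⟨c', h1, h2⟩
  · -- the whole pattern is inside `k :: v`
    exact hv a' l₂ l₃ s h2
  · cases c' with
    | nil =>
        rw [List.nil_append] at h2
        obtain ⟨h4, h5⟩ := List.cons.inj h2
        subst h4
        exact hv [] l₂ l₃ s (by simp [← h5])
    | cons b c'' =>
        obtain ⟨rfl, h3⟩ : s = b ∧ l₂ ++ s :: l₃ = c'' ++ k :: v := by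
          simpa using h2
        have hsu : s ∈ u := by rw [h1]; simp
        have hsk : s < k := hlt s hsu
        rcases List.append_eq_append_iff.1 h3 with ⟨a2, h4, h5⟩ | ⟨c2, h4, h5⟩
        · cases a2 with
          | nil =>
              simp only [List.nil_append] at h5
              obtain ⟨rfl, -⟩ := List.cons.inj h5
              omega
          | cons b2 a3 =>
              obtain ⟨rfl, -⟩ : s = b2 ∧ l₃ = a3 ++ k :: v := by simpa using h5
              refine hu l₁ l₂ a3 s ?_
              rw [h1, h4]
        · cases c2 with
          | nil =>
              simp only [List.nil_append] at h5
              obtain ⟨rfl, -⟩ := List.cons.inj h5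
              omega
          | cons b3 c3 =>
              obtain ⟨rfl, -⟩ : k = b3 ∧ v = c3 ++ s :: l₃ := by simpa using h5
              exact ⟨k, by simp [h4], hsk⟩

lemma pathProd_append {A : Type*} [Ring A] (B : ℕ → ℕ → A) (i j k : ℕ) (l₀ l' : List ℕ) :
    pathProd B i j (l₀ ++ k :: l') = pathProd B i k l₀ * pathProd B k j l' := by
  induction l₀ generalizing i with
  | nil => simp [pathProd]
  | cons a t ih => simp [pathProd, ih, mul_assoc]

lemma dropWhile_head_false {p : ℕ → Bool} :
    ∀ {l : List ℕ} {a : ℕ} {t : List ℕ}, List.dropWhile p l = a :: t → p a = false := by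
  intro l
  induction l with
  | nil => intro a t h; simp [List.dropWhile] at h
  | cons x xs ih =>
      intro a t h
      rw [List.dropWhile_cons] at h
      by_cases hx : p x = true
      · rw [if_pos hx] at h; exact ih h
      · rw [if_neg hx] at h
        obtain ⟨h1, -⟩ := List.cons.inj h
        rw [← h1]
        simpa using hx

lemma length_lt_of_adm : ∀ (n : ℕ) (l : List ℕ), IsAdmissible l → (∀ x ∈ l, x < n) →
    l.length < 2 ^ n := by
  intro n
  induction n with
  | zero =>
      intro l _ hb
      cases l with
      | nil => simp
      | cons a t => exact absurd (hb a (by simp)) (by omega)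
  | succ n ih =>
      intro l hl hb
      by_cases hn : n ∈ l
      · set p : ℕ → Bool := fun x => x ≠ n with hp
        obtain ⟨l₁, hl₁⟩ : ∃ t, List.takeWhile p l = t := ⟨_, rfl⟩
        have hsplit : l.takeWhile p ++ l.dropWhile p = l := List.takeWhile_append_dropWhile ..
        rw [hl₁] at hsplit
        have h1n : ∀ x ∈ l₁, x ≠ n := by
          intro x hx
          rw [← hl₁] at hx
          have := List.mem_takeWhile_imp hx
          simpa [hp] using this
        cases hr : l.dropWhile p with
        | nil =>
            exfalso
            rw [hr, List.append_nil] at hsplit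
            rw [← hsplit] at hn
            exact h1n n hn rfl
        | cons a l₂ =>
            have han : a = n := by
              have := dropWhile_head_false hr
              simpa [hp] using this
            subst han
            rw [hr] at hsplit
            have hll : l = l₁ ++ a :: l₂ := hsplit.symm
            have h2n : a ∉ l₂ := by
              intro hmem
              obtain ⟨b, c, hbc⟩ := List.append_of_mem hmem
              obtain ⟨t, htb, hnt⟩ := hl l₁ b c a (by rw [hll, hbc])
              have : t < a + 1 := hb t (by rw [hll, hbc]; simp [htb])
              omega
            have a1 : IsAdmissible l₁ := hl.infix ⟨[], a :: l₂, by simp [← hll]⟩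
            have a2 : IsAdmissible l₂ := hl.infix ⟨l₁ ++ [a], [], by simp [hll]⟩
            have b1' : ∀ x ∈ l₁, x < a :=
              fun x hx => lt_of_le_of_ne
                (Nat.lt_succ_iff.1 (hb x (by rw [hll]; simp [hx]))) (h1n x hx)
            have b2' : ∀ x ∈ l₂, x < a := by
              intro x hx
              have hxn : x < a + 1 := hb x (by rw [hll]; simp [hx])
              have : x ≠ a := fun h => h2n (h ▸ hx)
              omega
            have e1 := ih l₁ a1 b1'
            have e2 := ih l₂ a2 b2'
            have hlen : l.length = l₁.length + 1 + l₂.length := by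
              rw [hll]; simp; omega
            have h2 : (2:ℕ) ^ (a + 1) = 2 * 2 ^ a := by ring
            omega
      · have hb' : ∀ x ∈ l, x < n := by
          intro x hx
          have : x < n + 1 := hb x hx
          have : x ≠ n := fun h => hn (h ▸ hx)
          omega
        have := ih l hl hb'
        have : (2:ℕ) ^ n ≤ 2 ^ (n + 1) := Nat.pow_le_pow_right (by norm_num) (by omega)
        omega

lemma pmap_val {n : ℕ} : ∀ (l : List ℕ) (H : ∀ x ∈ l, x < n),
    List.map Fin.val (l.pmap (fun x h => (⟨x, h⟩ : Fin n)) H) = l := by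
  intro l
  induction l with
  | nil => intro H; rfl
  | cons a t ih => intro H; simp only [List.pmap, List.map_cons, ih]

lemma Dset_finite (n : ℕ) : (Dset n).Finite := by
  have hsub : Dset n ⊆
      (fun l : List (Fin n) => l.map Fin.val) '' {l : List (Fin n) | l.length < 2 ^ n} := by
    rintro l ⟨hadm, hb⟩
    have hb' : ∀ x ∈ l, x < n := fun x hx => (hb x hx).2
    refine ⟨l.pmap (fun x h => (⟨x, h⟩ : Fin n)) hb', ?_, ?_⟩
    · simpa using length_lt_of_adm n l hadm hb'
    · show List.map Fin.val (l.pmap (fun x h => (⟨x, h⟩ : Fin n)) hb') = l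
      exact pmap_val l hb'
  exact ((List.finite_length_lt (Fin n) (2 ^ n)).image _).subset hsub

lemma Sk_finite (k j : ℕ) : {l : List ℕ | (k :: l) ∈ Dset j}.Finite := by
  have h : {l : List ℕ | (k :: l) ∈ Dset j} = (fun l => k :: l) ⁻¹' (Dset j) := rfl
  rw [h]
  exact (Dset_finite j).preimage (List.cons_injective.injOn)

lemma split_unique {i : ℕ} : ∀ (l₀ m₀ : List ℕ) {k k' : ℕ} {l' m' : List ℕ},
    (∀ x ∈ l₀, x ≤ i) → (∀ x ∈ m₀, x ≤ i) → i < k → i < k' →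
    l₀ ++ k :: l' = m₀ ++ k' :: m' → l₀ = m₀ ∧ k = k' ∧ l' = m' := by
  intro l₀
  induction l₀ with
  | nil =>
      intro m₀ k k' l' m' h₀ h₁ hk hk' h
      cases m₀ with
      | nil => simpa using h
      | cons b t =>
          rw [List.nil_append, List.cons_append] at h
          obtain ⟨h1, -⟩ := List.cons.inj h
          have := h₁ b (by simp)
          omega
  | cons a t ih =>
      intro m₀ k k' l' m' h₀ h₁ hk hk' h
      cases m₀ with
      | nil =>
          rw [List.nil_append, List.cons_append] at h
          obtain ⟨h1, -⟩ := List.cons.inj h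
          have := h₀ a (by simp)
          omega
      | cons b t' =>
          simp only [List.cons_append, List.cons.injEq] at h
          obtain ⟨rfl, h⟩ := h
          obtain ⟨h1, h2, h3⟩ := ih t' (fun x hx => h₀ x (by simp [hx]))
            (fun x hx => h₁ x (by simp [hx])) hk hk' h
          exact ⟨by rw [h1], h2, h3⟩

lemma mem_split {i j : ℕ} (hij : i < j) {l : List ℕ} (hl : (i :: l) ∈ Dset j) :
    l ∈ Dset i ∨
      ∃ k, i < k ∧ k < j ∧ ∃ l₀ l', l₀ ∈ Dset i ∧ (k :: l') ∈ Dset j ∧ l = l₀ ++ k :: l' := by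
  obtain ⟨hadm, hbd⟩ := hl
  set p : ℕ → Bool := fun x => x ≤ i with hp
  obtain ⟨l₀, hl₀e⟩ : ∃ t, List.takeWhile p l = t := ⟨_, rfl⟩
  have hsplit : l.takeWhile p ++ l.dropWhile p = l := List.takeWhile_append_dropWhile ..
  rw [hl₀e] at hsplit
  have hl₀le : ∀ x ∈ l₀, x ≤ i := by
    intro x hx
    rw [← hl₀e] at hx
    have := List.mem_takeWhile_imp hx
    simpa [hp] using this
  have hl₀mem : ∀ x ∈ l₀, x ∈ l := by
    intro x hx
    rw [← hl₀e] at hx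
    exact (List.takeWhile_sublist p).subset hx
  have hil₀ : ∀ x ∈ l₀, x < i := by
    intro x hx
    rcases lt_or_eq_of_le (hl₀le x hx) with h | h
    · exact h
    exfalso
    obtain ⟨p1, t1, hpt⟩ := List.append_of_mem hx
    have hld : i :: l = [] ++ x :: (p1 ++ x :: (t1 ++ l.dropWhile p)) := by
      rw [List.nil_append, ← h]
      congr 1
      conv_lhs => rw [← hsplit]
      rw [hpt]
      simp
    obtain ⟨t, htp, hit⟩ := hadm [] p1 (t1 ++ l.dropWhile p) x hld
    have : t ≤ i := hl₀le t (by rw [hpt]; simp [htp])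
    omega
  have hadm' : IsAdmissible l := hadm.infix ⟨[i], [], by simp⟩
  cases hr : l.dropWhile p with
  | nil =>
      left
      rw [hr, List.append_nil] at hsplit
      exact ⟨hadm', fun x hx => ⟨(hbd x (by simp [hx])).1, hil₀ x (hsplit ▸ hx)⟩⟩
  | cons k l' =>
      right
      have hk : i < k := by
        have := dropWhile_head_false hr
        simp [hp] at this
        omega
      rw [hr] at hsplit
      have hll : l = l₀ ++ k :: l' := hsplit.symm
      refine ⟨k, hk, (hbd k (by rw [hll]; simp)).2, l₀, l', ?_, ?_, hll⟩
      · exact ⟨hadm.infix ⟨[i], k :: l', by rw [hll]; simp⟩,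
          fun x hx => ⟨(hbd x (by simp [hl₀mem x hx])).1, hil₀ x hx⟩⟩
      · refine ⟨hadm.infix ⟨i :: l₀, [], by simp [hll]⟩, ?_⟩
        intro x hx
        exact hbd x (by rw [hll]; simp; right; right; simpa using hx)

lemma mem_glue {i j k : ℕ} (hi : 1 ≤ i) (hik : i < k) (hkj : k < j)
    {l₀ l' : List ℕ} (h₀ : l₀ ∈ Dset i) (h' : (k :: l') ∈ Dset j) :
    (i :: (l₀ ++ k :: l')) ∈ Dset j := by
  obtain ⟨a0, b0⟩ := h₀
  obtain ⟨a1, b1⟩ := h'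
  constructor
  · have hu : IsAdmissible (i :: l₀) := isAdmissible_cons_of_lt a0 (fun x hx => (b0 x hx).2)
    have hlt : ∀ x ∈ i :: l₀, x < k := by
      intro x hx
      rcases List.mem_cons.1 hx with rfl | hx
      · exact hik
      · exact lt_trans (b0 x hx).2 hik
    have := isAdmissible_glue hu a1 hlt
    simpa using this
  · intro x hx
    rcases List.mem_cons.1 hx with rfl | hx
    · exact ⟨hi, lt_trans hik hkj⟩
    rcases List.mem_append.1 hx with hx | hx
    · exact ⟨(b0 x hx).1, lt_trans (lt_trans (b0 x hx).2 hik) hkj⟩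
    · exact b1 x hx

lemma finsum_mem_prod_mul {α β M : Type*} [NonUnitalNonAssocSemiring M]
    {s : Set α} {t : Set β} (hs : s.Finite) (ht : t.Finite) (g : α → M) (h : β → M) :
    ∑ᶠ p ∈ s ×ˢ t, g p.1 * h p.2 = (∑ᶠ a ∈ s, g a) * (∑ᶠ b ∈ t, h b) := by
  rw [← hs.coe_toFinset, ← ht.coe_toFinset, ← Finset.coe_product, finsum_mem_coe_finset,
    finsum_mem_coe_finset, finsum_mem_coe_finset, Finset.sum_mul_sum]
  rw [Finset.sum_product]

/-- `C_{i,j} = M_{i,j} + Σ_{k=i+1}^{j-1} M_{i,k} C_{k,j}` for `1 ≤ i < j ≤ q`. -/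
theorem C_eq_M_add_sum_MC (q i j : ℕ) (hi : 1 ≤ i) (hij : i < j) (hjq : j ≤ q) :
    Cpoly Bgen i j =
      Mpoly Bgen i j + ∑ k ∈ Finset.Ioo i j, Mpoly Bgen i k * Cpoly Bgen k j := by
  classical
  set T : ℕ → Set (List ℕ) :=
    fun k => (fun p : List ℕ × List ℕ => p.1 ++ k :: p.2) ''
      (Dset i ×ˢ {l : List ℕ | (k :: l) ∈ Dset j}) with hT
  have hset : {l : List ℕ | (i :: l) ∈ Dset j}
      = Dset i ∪ ⋃ k ∈ (Finset.Ioo i j : Set ℕ), T k := by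
    ext l
    constructor
    · intro hl
      rcases mem_split hij hl with h | ⟨k, hik, hkj, l₀, l', h₀, h', rfl⟩
      · exact Or.inl h
      · refine Or.inr (Set.mem_biUnion ?_ ⟨(l₀, l'), ⟨h₀, h'⟩, rfl⟩)
        simp only [Finset.coe_Ioo, Set.mem_Ioo]
        exact ⟨hik, hkj⟩
    · rintro (h | h)
      · obtain ⟨ha, hb⟩ := h
        refine ⟨isAdmissible_cons_of_lt ha (fun x hx => (hb x hx).2), ?_⟩
        intro x hx
        rcases List.mem_cons.1 hx with rfl | hx
        · exact ⟨hi, hij⟩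
        · exact ⟨(hb x hx).1, lt_trans (hb x hx).2 hij⟩
      · simp only [Set.mem_iUnion, exists_prop] at h
        obtain ⟨k, hk, ⟨⟨l₀, l'⟩, ⟨h₀, h'⟩, rfl⟩⟩ := h
        simp only [Finset.coe_Ioo, Set.mem_Ioo] at hk
        exact mem_glue hi hk.1 hk.2 h₀ h'
  have hTfin : ∀ k ∈ (Finset.Ioo i j : Set ℕ), (T k).Finite := fun k _ =>
    ((Dset_finite i).prod (Sk_finite k j)).image _
  have hdis1 : Disjoint (Dset i) (⋃ k ∈ (Finset.Ioo i j : Set ℕ), T k) := by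
    rw [Set.disjoint_left]
    rintro l ⟨-, hb⟩ hmem
    simp only [Set.mem_iUnion, exists_prop] at hmem
    obtain ⟨k, hk, ⟨⟨l₀, l'⟩, -, rfl⟩⟩ := hmem
    simp only [Finset.coe_Ioo, Set.mem_Ioo] at hk
    have : k < i := (hb k (by simp)).2
    omega
  have hpair : (Finset.Ioo i j : Set ℕ).PairwiseDisjoint T := by
    intro k hk k' hk' hne
    simp only [Finset.coe_Ioo, Set.mem_Ioo] at hk hk'
    rw [Function.onFun, Set.disjoint_left]
    rintro l ⟨⟨l₀, l'⟩, ⟨h₀, -⟩, rfl⟩ ⟨⟨m₀, m'⟩, ⟨h₁, -⟩, heq⟩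
    obtain ⟨-, h2, -⟩ := split_unique m₀ l₀ (fun x hx => (h₁.2 x hx).2.le)
      (fun x hx => (h₀.2 x hx).2.le) hk'.1 hk.1 heq
    exact hne h2.symm
  have hCe : Cpoly Bgen i j = ∑ᶠ l ∈ {l : List ℕ | (i :: l) ∈ Dset j}, pathProd Bgen i j l := by
    rw [Cpoly, if_neg hij.ne]
  rw [hCe, hset, finsum_mem_union hdis1 (Dset_finite i)
    (Set.Finite.biUnion (Finset.Ioo i j).finite_toSet hTfin)]
  congr 1
  · rw [Mpoly, min_eq_left hij.le]
  · rw [finsum_mem_biUnion hpair (Finset.Ioo i j).finite_toSet hTfin,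
      finsum_mem_coe_finset]
    refine Finset.sum_congr rfl ?_
    intro k hk
    simp only [Finset.mem_Ioo] at hk
    have hinj : Set.InjOn (fun p : List ℕ × List ℕ => p.1 ++ k :: p.2)
        (Dset i ×ˢ {l : List ℕ | (k :: l) ∈ Dset j}) := by
      rintro ⟨l₀, l'⟩ ⟨h₀, -⟩ ⟨m₀, m'⟩ ⟨h₁, -⟩ heq
      obtain ⟨e1, -, e3⟩ := split_unique l₀ m₀ (fun x hx => (h₀.2 x hx).2.le)
        (fun x hx => (h₁.2 x hx).2.le) hk.1 hk.1 heq
      exact Prod.ext e1 e3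
    rw [hT, finsum_mem_image hinj]
    have : ∑ᶠ p ∈ Dset i ×ˢ {l : List ℕ | (k :: l) ∈ Dset j},
        pathProd Bgen i j (p.1 ++ k :: p.2)
        = ∑ᶠ p ∈ Dset i ×ˢ {l : List ℕ | (k :: l) ∈ Dset j},
        pathProd Bgen i k p.1 * pathProd Bgen k j p.2 :=
      finsum_mem_congr rfl (fun p _ => pathProd_append Bgen i j k p.1 p.2)
    rw [this, finsum_mem_prod_mul (Dset_finite i) (Sk_finite k j)]
    rw [Mpoly, min_eq_left hk.1.le, Cpoly, if_neg (by omega : ¬ k = j)]
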